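/- Let n ≥ 1 and let {D_l}_{l∈ι} be a finite nonempty family of real n×m_l matrices with every column of every D_l summing to zero. Let λ > 0 satisfy: for every l ∈ ι and every δ ∈ ℝⁿ with Σ_i δ_i = 0, δᵀ(D_l D_lᵀ)δ ≥ λ·‖δ‖₂². Set m̲ = min_l m_l and m̄ = max_l m_l. Let Ω be a predefined-time consensus function with data (Ω̂, β, d). For each l, let κ^{(l)}_e (one gain per column e of D_l) satisfy κ^{(l)}_e ≥ κ for some κ > 0, and define F_l : ℝ^{m_l} → ℝ^{m_l} by F_l(v)_e = κ^{(l)}_e·Ω(|v_e|)/v_e if v_e ≠ 0 and F_l(v)_e = 0 if v_e = 0. Let σ : [t₀,∞) → ι be arbitrary and let x : [t₀,∞) → ℝⁿ be differentiable with ẋ(t) = −D_{σ(t)}·F_{σ(t)}(D_{σ(t)}ᵀ x(t)) for all t ≥ t₀. Then for all t ≥ t₀ + β(m̲)^d/(κ·λ·β(m̄)²) and all i, x_i(t) = (1/n)·Σ_{j=1}^n x_j(t₀); i.e. average consensus is reached in a fixed time bounded by β(m̲)^d/(κ·λ·β(m̄)²), independently of x(t₀). -/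

import Mathlib

open Matrix MeasureTheory

/-- A predefined-time consensus function Ω with data (Ω̂, β, d): Ω is monotonically
increasing and nonnegative on [0,∞); Ω̂ is monotonically increasing on [0,∞), positive on
(0,∞) and Ω̂(z)/z is continuous on (0,∞); β is nonincreasing and positive; d ≥ 1;
Ω̂(β(n)‖x‖₂) ≤ β(n)^d Σᵢ Ω(xᵢ) for all n ≥ 1 and nonnegative x ∈ ℝⁿ; and
∫₀^∞ z/Ω̂(z) dz = 1. -/
def IsPredefinedTimeConsensusFunction (Ω Ωhat : ℝ → ℝ) (β : ℕ → ℝ) (d : ℝ) : Prop :=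
  Monotone Ω ∧ (∀ z : ℝ, 0 ≤ z → 0 ≤ Ω z) ∧
  MonotoneOn Ωhat (Set.Ici 0) ∧ (∀ z : ℝ, 0 < z → 0 < Ωhat z) ∧
  ContinuousOn (fun z => Ωhat z / z) (Set.Ioi 0) ∧
  Antitone β ∧ (∀ n : ℕ, 0 < β n) ∧ 1 ≤ d ∧
  (∀ n : ℕ, 1 ≤ n → ∀ x : Fin n → ℝ, (∀ i, 0 ≤ x i) →
    Ωhat (β n * Real.sqrt (∑ i, x i ^ 2)) ≤ β n ^ d * ∑ i, Ω (x i)) ∧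
  (∫ z in Set.Ioi (0:ℝ), z / Ωhat z) = 1

section Aux

lemma antitoneOn_of_hasDerivAt_nonpos' {f f' : ℝ → ℝ} {a b : ℝ}
    (hder : ∀ t ∈ Set.Icc a b, HasDerivAt f (f' t) t)
    (hle : ∀ t ∈ Set.Ioo a b, f' t ≤ 0) : AntitoneOn f (Set.Icc a b) := by
  apply antitoneOn_of_deriv_nonpos (convex_Icc a b)
  · exact fun t ht => (hder t ht).continuousAt.continuousWithinAt
  · rw [interior_Icc]
    exact fun t ht =>
      ((hder t (Set.Ioo_subset_Icc_self ht)).differentiableAt).differentiableWithinAt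
  · rw [interior_Icc]
    intro t ht
    rw [(hder t (Set.Ioo_subset_Icc_self ht)).deriv]
    exact hle t ht

lemma antitoneOn_of_hasDerivAt_nonpos_Ici' {f f' : ℝ → ℝ} {a : ℝ}
    (hder : ∀ t ∈ Set.Ici a, HasDerivAt f (f' t) t)
    (hle : ∀ t ∈ Set.Ioi a, f' t ≤ 0) : AntitoneOn f (Set.Ici a) := by
  apply antitoneOn_of_deriv_nonpos (convex_Ici a)
  · exact fun t ht => (hder t ht).continuousAt.continuousWithinAt
  · rw [interior_Ici]
    exact fun t ht => ((hder t (Set.Ioi_subset_Ici_self ht)).differentiableAt).differentiableWithinAt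
  · rw [interior_Ici]
    intro t ht
    rw [(hder t (Set.Ioi_subset_Ici_self ht)).deriv]
    exact hle t ht

variable {n M : ℕ}

lemma sum_mulVec_eq_zero' (Dl : Matrix (Fin n) (Fin M) ℝ)
    (hDl : ∀ j, (∑ i, Dl i j) = 0) (q : Fin M → ℝ) :
    ∑ i, (Dl.mulVec q) i = 0 := by
  simp only [Matrix.mulVec, dotProduct]
  rw [Finset.sum_comm]
  have : ∀ j ∈ Finset.univ (α := Fin M), (∑ i, Dl i j * q j) = 0 := by
    intro j _
    rw [← Finset.sum_mul, hDl j, zero_mul]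
  simp [Finset.sum_congr rfl this]

lemma transpose_mulVec_eq' (Dl : Matrix (Fin n) (Fin M) ℝ)
    (hDl : ∀ j, (∑ i, Dl i j) = 0) (y : Fin n → ℝ) (c : ℝ) (j : Fin M) :
    (Dlᵀ.mulVec y) j = ∑ i, Dl i j * (y i - c) := by
  simp only [Matrix.mulVec, dotProduct, Matrix.transpose_apply, mul_sub]
  rw [Finset.sum_sub_distrib, ← Finset.sum_mul, hDl j, zero_mul, sub_zero]

lemma dot_mulVec_eq' (Dl : Matrix (Fin n) (Fin M) ℝ) (δ : Fin n → ℝ) (q : Fin M → ℝ) :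
    ∑ i, δ i * (Dl.mulVec q) i = (Dlᵀ.mulVec δ) ⬝ᵥ q := by
  simp only [Matrix.mulVec, dotProduct, Matrix.transpose_apply]
  simp_rw [Finset.mul_sum, Finset.sum_mul]
  rw [Finset.sum_comm]
  exact Finset.sum_congr rfl fun j _ => Finset.sum_congr rfl fun i _ => by ring

lemma quad_eq' (Dl : Matrix (Fin n) (Fin M) ℝ) (δ : Fin n → ℝ) :
    δ ⬝ᵥ ((Dl * Dlᵀ).mulVec δ) = ∑ e, ((Dlᵀ.mulVec δ) e) ^ 2 := by
  rw [← Matrix.mulVec_mulVec, Matrix.dotProduct_mulVec, ← Matrix.mulVec_transpose]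
  simp [dotProduct, sq]

lemma dot_F_eq' (κe : Fin M → ℝ) (Ω : ℝ → ℝ) (v Fv : Fin M → ℝ)
    (hFv : ∀ e, Fv e = if v e = 0 then 0 else κe e * Ω |v e| / v e) :
    v ⬝ᵥ Fv = ∑ e, (if v e = 0 then 0 else κe e * Ω |v e|) := by
  apply Finset.sum_congr rfl
  intro e _
  rw [hFv e]
  by_cases h : v e = 0
  · simp [h]
  · rw [if_neg h, if_neg h]
    field_simp

end Aux

set_option maxHeartbeats 1000000 in
/-- fixed-time part of Theorem 2: protocol (i) on a switched dynamic
network reaches average consensus in a fixed time bounded by β(m̲)^d/(κλβ(m̄)²),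
independently of the initial condition. -/
theorem stmt12 {ι : Type} [Fintype ι] [Nonempty ι] {n : ℕ} (hn : 1 ≤ n)
    (m : ι → ℕ) (D : (l : ι) → Matrix (Fin n) (Fin (m l)) ℝ)
    (hD : ∀ l, ∀ j, (∑ i, D l i j) = 0)
    (lam : ℝ) (hlam : 0 < lam)
    (hRay : ∀ l, ∀ δ : Fin n → ℝ, (∑ i, δ i) = 0 →
      lam * (∑ i, δ i ^ 2) ≤ δ ⬝ᵥ ((D l * (D l)ᵀ).mulVec δ))
    (mlow mhigh : ℕ)
    (hmlow : IsLeast (Set.range m) mlow) (hmhigh : IsGreatest (Set.range m) mhigh)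
    (Ω Ωhat : ℝ → ℝ) (β : ℕ → ℝ) (d : ℝ)
    (hΩ : IsPredefinedTimeConsensusFunction Ω Ωhat β d)
    (κ : (l : ι) → Fin (m l) → ℝ) (k : ℝ) (hk : 0 < k) (hκ : ∀ l e, k ≤ κ l e)
    (F : (l : ι) → (Fin (m l) → ℝ) → (Fin (m l) → ℝ))
    (hF : ∀ l v e, F l v e = if v e = 0 then 0 else κ l e * Ω |v e| / v e)
    (σ : ℝ → ι) (t₀ : ℝ) (x : ℝ → Fin n → ℝ)
    (hx : ∀ t, t₀ ≤ t →
      HasDerivAt x (-(D (σ t)).mulVec (F (σ t) ((D (σ t))ᵀ.mulVec (x t)))) t) :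
    ∀ t, t₀ + β mlow ^ d / (k * lam * β mhigh ^ 2) ≤ t →
      ∀ i, x t i = (1 / (n : ℝ)) * ∑ j, x t₀ j := by
  obtain ⟨hΩm, hΩnn, hOhm, hOhp, hOhc, hβa, hβp, hd1, hkey, hint1⟩ := hΩ
  have hn0 : (0:ℝ) < n := by exact_mod_cast hn
  set c : ℝ := (1 / (n : ℝ)) * ∑ j, x t₀ j with hc
  set V : ℝ → ℝ := fun t => ∑ i, (x t i - c) ^ 2 with hV
  set VD : ℝ → ℝ := fun t =>
    -2 * (((D (σ t))ᵀ.mulVec (x t)) ⬝ᵥ F (σ t) ((D (σ t))ᵀ.mulVec (x t))) with hVDdef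
  have hVnonneg : ∀ t, 0 ≤ V t := fun t => Finset.sum_nonneg fun i _ => sq_nonneg _
  -- conservation of the sum
  have hsum : ∀ t, t₀ ≤ t → ∑ i, x t i = ∑ i, x t₀ i := by
    intro t ht
    have hcont : ContinuousOn (fun s => ∑ i, x s i) (Set.Icc t₀ t) := by
      intro s hs
      exact (HasDerivAt.fun_sum fun i _ =>
        (hasDerivAt_pi.mp (hx s hs.1)) i).continuousAt.continuousWithinAt
    have hder : ∀ s ∈ Set.Ico t₀ t, HasDerivWithinAt (fun u => ∑ i, x u i) 0 (Set.Ici s) s := by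
      intro s hs
      have h1 : HasDerivAt (fun u => ∑ i, x u i)
          (∑ i, (-(D (σ s)).mulVec (F (σ s) ((D (σ s))ᵀ.mulVec (x s)))) i) s :=
        HasDerivAt.fun_sum fun i _ => (hasDerivAt_pi.mp (hx s hs.1)) i
      have h2 : (∑ i, (-(D (σ s)).mulVec (F (σ s) ((D (σ s))ᵀ.mulVec (x s)))) i) = 0 := by
        have := sum_mulVec_eq_zero' (D (σ s)) (hD (σ s)) (F (σ s) ((D (σ s))ᵀ.mulVec (x s)))
        simpa [Finset.sum_neg_distrib] using this
      rw [h2] at h1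
      exact h1.hasDerivWithinAt
    exact constant_of_has_deriv_right_zero hcont hder t ⟨ht, le_rfl⟩
  have hδsum : ∀ t, t₀ ≤ t → (∑ i, (x t i - c)) = 0 := by
    intro t ht
    rw [Finset.sum_sub_distrib, hsum t ht, Finset.sum_const, Finset.card_fin]
    rw [hc]
    rw [nsmul_eq_mul, ← mul_assoc, mul_one_div_cancel hn0.ne', one_mul, sub_self]
  -- derivative of V
  have hVder : ∀ t, t₀ ≤ t → HasDerivAt V (VD t) t := by
    intro t ht
    have h1 : HasDerivAt V (∑ i, ((2:ℕ) : ℝ) * (x t i - c) ^ (2 - 1) *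
        ((-(D (σ t)).mulVec (F (σ t) ((D (σ t))ᵀ.mulVec (x t)))) i)) t :=
      HasDerivAt.fun_sum fun i _ => (((hasDerivAt_pi.mp (hx t ht)) i).sub_const c).pow 2
    have h2 : (∑ i, ((2:ℕ) : ℝ) * (x t i - c) ^ (2 - 1) *
        ((-(D (σ t)).mulVec (F (σ t) ((D (σ t))ᵀ.mulVec (x t)))) i)) = VD t := by
      have h3 : ∀ q : Fin (m (σ t)) → ℝ,
          ∑ i, (x t i - c) * ((D (σ t)).mulVec q) i = ((D (σ t))ᵀ.mulVec (x t)) ⬝ᵥ q := by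
        intro q
        rw [dot_mulVec_eq' (D (σ t)) (fun i => x t i - c) q]
        apply Finset.sum_congr rfl
        intro e _
        congr 1
        rw [transpose_mulVec_eq' (D (σ t)) (hD (σ t)) (x t) c e]
        simp [Matrix.mulVec, dotProduct, Matrix.transpose_apply]
      rw [hVDdef]
      simp only
      rw [← h3 (F (σ t) ((D (σ t))ᵀ.mulVec (x t))), Finset.mul_sum]
      apply Finset.sum_congr rfl
      intro i _
      simp only [Pi.neg_apply]
      ring
    rw [h2] at h1
    exact h1
  -- dot product terms are nonnegative
  have htermnn : ∀ (t : ℝ) (e : Fin (m (σ t))),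
      0 ≤ (if ((D (σ t))ᵀ.mulVec (x t)) e = 0 then 0
        else κ (σ t) e * Ω |((D (σ t))ᵀ.mulVec (x t)) e|) := by
    intro t e
    split
    · exact le_rfl
    · exact mul_nonneg (le_trans hk.le (hκ _ _)) (hΩnn _ (abs_nonneg _))
  have hdotval : ∀ t : ℝ,
      ((D (σ t))ᵀ.mulVec (x t)) ⬝ᵥ F (σ t) ((D (σ t))ᵀ.mulVec (x t)) =
        ∑ e, (if ((D (σ t))ᵀ.mulVec (x t)) e = 0 then 0
          else κ (σ t) e * Ω |((D (σ t))ᵀ.mulVec (x t)) e|) :=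
    fun t => dot_F_eq' (κ (σ t)) Ω _ _ (hF (σ t) _)
  have hdotnn : ∀ t : ℝ,
      0 ≤ ((D (σ t))ᵀ.mulVec (x t)) ⬝ᵥ F (σ t) ((D (σ t))ᵀ.mulVec (x t)) := by
    intro t
    rw [hdotval t]
    exact Finset.sum_nonneg fun e _ => htermnn t e
  have hVDnp : ∀ t : ℝ, VD t ≤ 0 := by
    intro t
    rw [hVDdef]
    simp only
    linarith [hdotnn t]
  have hVanti : AntitoneOn V (Set.Ici t₀) :=
    antitoneOn_of_hasDerivAt_nonpos_Ici' (fun t ht => hVder t ht) (fun t _ => hVDnp t)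
  -- Rayleigh bound along the trajectory
  have hnorm : ∀ t, t₀ ≤ t → lam * V t ≤ ∑ e, (((D (σ t))ᵀ.mulVec (x t)) e) ^ 2 := by
    intro t ht
    have h1 := hRay (σ t) (fun i => x t i - c) (hδsum t ht)
    rw [quad_eq'] at h1
    have h2 : (D (σ t))ᵀ.mulVec (fun i => x t i - c) = (D (σ t))ᵀ.mulVec (x t) := by
      funext j
      rw [transpose_mulVec_eq' (D (σ t)) (hD (σ t)) (fun i => x t i - c) 0 j,
        transpose_mulVec_eq' (D (σ t)) (hD (σ t)) (x t) c j]
      simp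
    rw [h2] at h1
    exact h1
  -- time increment is positive
  have hClow : (0:ℝ) < β mlow ^ d := Real.rpow_pos_of_pos (hβp mlow) d
  have hTpos : 0 < β mlow ^ d / (k * lam * β mhigh ^ 2) :=
    div_pos hClow (mul_pos (mul_pos hk hlam) (pow_pos (hβp mhigh) 2))
  -- final extraction
  have hfin : ∀ t₁ : ℝ, V t₁ = 0 → ∀ i, x t₁ i = c := by
    intro t₁ h0 i
    have h1 := (Finset.sum_eq_zero_iff_of_nonneg
      (fun i _ => sq_nonneg (x t₁ i - c))).1 h0 i (Finset.mem_univ i)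
    have h2 : x t₁ i - c = 0 := by
      have h3 : (2:ℕ) ≠ 0 := two_ne_zero
      exact (pow_eq_zero_iff h3).1 h1
    linarith
  rcases (hΩnn 0 le_rfl).eq_or_lt with hΩ0 | hΩ0
  · -- CASE I : Ω 0 = 0
    have hrate1 : ∀ t, t₀ ≤ t → 0 < V t →
        k / β mlow ^ d * Ωhat (β mhigh * Real.sqrt (lam * V t)) ≤
          ((D (σ t))ᵀ.mulVec (x t)) ⬝ᵥ F (σ t) ((D (σ t))ᵀ.mulVec (x t)) := by
      intro t ht hVt
      have hpos2 : 0 < ∑ e, (((D (σ t))ᵀ.mulVec (x t)) e) ^ 2 :=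
        lt_of_lt_of_le (mul_pos hlam hVt) (hnorm t ht)
      have hm1 : 1 ≤ m (σ t) := by
        rcases Nat.eq_zero_or_pos (m (σ t)) with h | h
        · exfalso
          haveI : IsEmpty (Fin (m (σ t))) := by rw [h]; infer_instance
          rw [Finset.univ_eq_empty, Finset.sum_empty] at hpos2
          exact lt_irrefl 0 hpos2
        · exact h
      have hkey1 := hkey (m (σ t)) hm1 (fun e => |((D (σ t))ᵀ.mulVec (x t)) e|)
        (fun e => abs_nonneg _)
      simp only [sq_abs] at hkey1
      have hml : mlow ≤ m (σ t) := hmlow.2 ⟨σ t, rfl⟩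
      have hmh : m (σ t) ≤ mhigh := hmhigh.2 ⟨σ t, rfl⟩
      have hβ1 : β mhigh ≤ β (m (σ t)) := hβa hmh
      have hβ2 : β (m (σ t)) ≤ β mlow := hβa hml
      have hs1 : Real.sqrt (lam * V t) ≤ Real.sqrt (∑ e, (((D (σ t))ᵀ.mulVec (x t)) e) ^ 2) :=
        Real.sqrt_le_sqrt (hnorm t ht)
      have harg : β mhigh * Real.sqrt (lam * V t) ≤
          β (m (σ t)) * Real.sqrt (∑ e, (((D (σ t))ᵀ.mulVec (x t)) e) ^ 2) :=
        mul_le_mul hβ1 hs1 (Real.sqrt_nonneg _) (le_of_lt (hβp _))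
      have hOh1 : Ωhat (β mhigh * Real.sqrt (lam * V t)) ≤
          Ωhat (β (m (σ t)) * Real.sqrt (∑ e, (((D (σ t))ᵀ.mulVec (x t)) e) ^ 2)) :=
        hOhm (Set.mem_Ici.2 (mul_nonneg (hβp mhigh).le (Real.sqrt_nonneg _)))
          (Set.mem_Ici.2 (mul_nonneg (hβp _).le (Real.sqrt_nonneg _))) harg
      have hΩsnn : 0 ≤ ∑ e, Ω |((D (σ t))ᵀ.mulVec (x t)) e| :=
        Finset.sum_nonneg fun e _ => hΩnn _ (abs_nonneg _)
      have hβd : β (m (σ t)) ^ d ≤ β mlow ^ d :=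
        Real.rpow_le_rpow (hβp _).le hβ2 (by linarith)
      have hOh2 : Ωhat (β mhigh * Real.sqrt (lam * V t)) ≤
          β mlow ^ d * ∑ e, Ω |((D (σ t))ᵀ.mulVec (x t)) e| :=
        le_trans hOh1 (le_trans hkey1 (mul_le_mul_of_nonneg_right hβd hΩsnn))
      have hdge : k * ∑ e, Ω |((D (σ t))ᵀ.mulVec (x t)) e| ≤
          ((D (σ t))ᵀ.mulVec (x t)) ⬝ᵥ F (σ t) ((D (σ t))ᵀ.mulVec (x t)) := by
        rw [hdotval t, Finset.mul_sum]
        apply Finset.sum_le_sum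
        intro e _
        by_cases h : ((D (σ t))ᵀ.mulVec (x t)) e = 0
        · rw [if_pos h, h]
          simp [← hΩ0]
        · rw [if_neg h]
          exact mul_le_mul_of_nonneg_right (hκ _ _) (hΩnn _ (abs_nonneg _))
      refine le_trans ?_ hdge
      rw [div_mul_eq_mul_div, div_le_iff₀ hClow]
      calc k * Ωhat (β mhigh * Real.sqrt (lam * V t))
          ≤ k * (β mlow ^ d * ∑ e, Ω |((D (σ t))ᵀ.mulVec (x t)) e|) :=
            mul_le_mul_of_nonneg_left hOh2 hk.le
        _ = k * (∑ e, Ω |((D (σ t))ᵀ.mulVec (x t)) e|) * β mlow ^ d := by ring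
    -- integral machinery
    set f : ℝ → ℝ := fun z => z / Ωhat z with hfdef
    have hfint : IntegrableOn f (Set.Ioi (0:ℝ)) := by
      by_contra h
      rw [integral_undef h] at hint1
      norm_num at hint1
    have hfcont : ContinuousOn f (Set.Ioi (0:ℝ)) := by
      have h1 : ContinuousOn (fun z => (Ωhat z / z)⁻¹) (Set.Ioi (0:ℝ)) :=
        ContinuousOn.inv₀ hOhc (fun z hz => ne_of_gt (div_pos (hOhp z hz) hz))
      apply h1.congr
      intro z _
      rw [hfdef]
      simp only
      rw [inv_div]
    have hii : ∀ y : ℝ, 0 < y → IntervalIntegrable f volume 0 y := by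
      intro y hy
      rw [intervalIntegrable_iff_integrableOn_Ioc_of_le hy.le]
      exact hfint.mono_set Set.Ioc_subset_Ioi_self
    set g : ℝ → ℝ := fun y => ∫ z in (0:ℝ)..y, f z with hgdef
    have hgderiv : ∀ y : ℝ, 0 < y → HasDerivAt g (f y) y := fun y hy =>
      intervalIntegral.integral_hasDerivAt_right (hii y hy)
        (ContinuousOn.stronglyMeasurableAtFilter isOpen_Ioi hfcont y hy)
        (hfcont.continuousAt (isOpen_Ioi.mem_nhds hy))
    have hfnn : ∀ z ∈ Set.Ioi (0:ℝ), 0 ≤ f z := fun z hz => (div_pos hz (hOhp z hz)).le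
    have hgle : ∀ y : ℝ, 0 < y → g y ≤ 1 := by
      intro y hy
      rw [hgdef]
      simp only
      rw [intervalIntegral.integral_of_le hy.le, ← hint1]
      apply setIntegral_mono_set hfint
      · exact (ae_restrict_iff' measurableSet_Ioi).2 (Filter.Eventually.of_forall hfnn)
      · exact (Set.Ioc_subset_Ioi_self).eventuallyLE
    have hgpos : ∀ y : ℝ, 0 < y → 0 < g y := fun y hy =>
      intervalIntegral.intervalIntegral_pos_of_pos_on (hii y hy)
        (fun z hz => div_pos hz.1 (hOhp z hz.1)) hy
    -- comparison argument
    intro t1 ht1 i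
    have ht01 : t₀ < t1 := lt_of_lt_of_le (by linarith) ht1
    apply hfin t1 ?_ i
    by_contra hne0
    have hVt1 : 0 < V t1 := (hVnonneg t1).lt_of_ne (Ne.symm hne0)
    have hVpos : ∀ s ∈ Set.Icc t₀ t1, 0 < V s := fun s hs =>
      lt_of_lt_of_le hVt1 (hVanti (Set.mem_Ici.2 hs.1) (Set.mem_Ici.2 (hs.1.trans hs.2)) hs.2)
    set cst := k * lam * β mhigh ^ 2 / β mlow ^ d with hcst
    have hcstpos : 0 < cst :=
      div_pos (mul_pos (mul_pos hk hlam) (pow_pos (hβp mhigh) 2)) hClow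
    set u : ℝ → ℝ := fun s => β mhigh * Real.sqrt (lam * V s) with hu
    have hupos : ∀ s ∈ Set.Icc t₀ t1, 0 < u s := fun s hs =>
      mul_pos (hβp mhigh) (Real.sqrt_pos.2 (mul_pos hlam (hVpos s hs)))
    set ψ : ℝ → ℝ := fun s => g (u s) + cst * (s - t₀) with hψ
    set ψ' : ℝ → ℝ := fun s =>
      f (u s) * (β mhigh * (1 / (2 * Real.sqrt (lam * V s)) * (lam * VD s))) + cst with hψ'
    have hψder : ∀ s ∈ Set.Icc t₀ t1, HasDerivAt ψ (ψ' s) s := by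
      intro s hs
      have h1 : HasDerivAt (fun r => lam * V r) (lam * VD s) s := (hVder s hs.1).const_mul lam
      have h2 : HasDerivAt (fun r => Real.sqrt (lam * V r))
          (1 / (2 * Real.sqrt (lam * V s)) * (lam * VD s)) s :=
        (Real.hasDerivAt_sqrt (ne_of_gt (mul_pos hlam (hVpos s hs)))).comp s h1
      have h3 : HasDerivAt u
          (β mhigh * (1 / (2 * Real.sqrt (lam * V s)) * (lam * VD s))) s :=
        h2.const_mul (β mhigh)
      have h4 : HasDerivAt (fun r => g (u r))
          (f (u s) * (β mhigh * (1 / (2 * Real.sqrt (lam * V s)) * (lam * VD s)))) s :=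
        (hgderiv (u s) (hupos s hs)).comp s h3
      have h5 : HasDerivAt (fun r => cst * (r - t₀)) cst s := by
        simpa using ((hasDerivAt_id s).sub_const t₀).const_mul cst
      exact h4.add h5
    have hψnonpos : ∀ s ∈ Set.Ioo t₀ t1, ψ' s ≤ 0 := by
      intro s hs
      have hsIcc := Set.Ioo_subset_Icc_self hs
      have hVs := hVpos s hsIcc
      have hS2pos : 0 < Real.sqrt (lam * V s) := Real.sqrt_pos.2 (mul_pos hlam hVs)
      have hA : 0 < Ωhat (u s) := hOhp _ (hupos s hsIcc)
      have hA : 0 < Ωhat (β mhigh * Real.sqrt (lam * V s)) :=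
        hOhp _ (mul_pos (hβp mhigh) hS2pos)
      have hVDle : VD s ≤
          -2 * (k / β mlow ^ d * Ωhat (β mhigh * Real.sqrt (lam * V s))) := by
        have h1 := hrate1 s hsIcc.1 hVs
        rw [hVDdef]
        simp only
        linarith
      rw [hψ']
      simp only [hu, hfdef]
      have key0 : ∀ S A L B : ℝ, S ≠ 0 → A ≠ 0 →
          B * S / A * (B * (1 / (2 * S) * (lam * L))) = B ^ 2 * lam * L / (2 * A) := by
        intro S A L B hS hA
        field_simp
      have key : β mhigh * Real.sqrt (lam * V s) / Ωhat (β mhigh * Real.sqrt (lam * V s)) *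
            (β mhigh * (1 / (2 * Real.sqrt (lam * V s)) * (lam * VD s))) =
          β mhigh ^ 2 * lam * VD s / (2 * Ωhat (β mhigh * Real.sqrt (lam * V s))) :=
        key0 _ _ _ _ (ne_of_gt hS2pos) (ne_of_gt hA)
      rw [key]
      have h6 : β mhigh ^ 2 * lam * VD s /
          (2 * Ωhat (β mhigh * Real.sqrt (lam * V s))) ≤ -cst := by
        rw [div_le_iff₀ (by positivity : (0:ℝ) <
          2 * Ωhat (β mhigh * Real.sqrt (lam * V s))), hcst]
        have h7 : VD s ≤
            -(2 * k * Ωhat (β mhigh * Real.sqrt (lam * V s)) / β mlow ^ d) := by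
          have heq : -2 * (k / β mlow ^ d * Ωhat (β mhigh * Real.sqrt (lam * V s))) =
              -(2 * k * Ωhat (β mhigh * Real.sqrt (lam * V s)) / β mlow ^ d) := by
            ring
          linarith [hVDle, heq.le, heq.ge]
        have h8 : 0 < β mhigh ^ 2 * lam := mul_pos (pow_pos (hβp mhigh) 2) hlam
        have h9 : β mhigh ^ 2 * lam * VD s ≤ β mhigh ^ 2 * lam *
            (-(2 * k * Ωhat (β mhigh * Real.sqrt (lam * V s)) / β mlow ^ d)) :=
          mul_le_mul_of_nonneg_left h7 h8.le
        calc β mhigh ^ 2 * lam * VD s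
            ≤ β mhigh ^ 2 * lam *
              (-(2 * k * Ωhat (β mhigh * Real.sqrt (lam * V s)) / β mlow ^ d)) := h9
          _ = -(k * lam * β mhigh ^ 2 / β mlow ^ d) *
              (2 * Ωhat (β mhigh * Real.sqrt (lam * V s))) := by
              ring
      linarith
    have hψanti : AntitoneOn ψ (Set.Icc t₀ t1) :=
      antitoneOn_of_hasDerivAt_nonpos' hψder hψnonpos
    have h8 := hψanti (Set.left_mem_Icc.2 ht01.le) (Set.right_mem_Icc.2 ht01.le) ht01.le
    have h9 : g (u t₀) ≤ 1 := hgle _ (hupos t₀ (Set.left_mem_Icc.2 ht01.le))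
    have h10 : 0 < g (u t1) := hgpos _ (hupos t1 (Set.right_mem_Icc.2 ht01.le))
    have h11 : 1 ≤ cst * (t1 - t₀) := by
      have h12 : β mlow ^ d / (k * lam * β mhigh ^ 2) ≤ t1 - t₀ := by linarith
      have hne1 : (k * lam * β mhigh ^ 2) ≠ 0 :=
        ne_of_gt (mul_pos (mul_pos hk hlam) (pow_pos (hβp mhigh) 2))
      have h13 : cst * (β mlow ^ d / (k * lam * β mhigh ^ 2)) = 1 := by
        rw [hcst, div_mul_div_comm, mul_comm (k * lam * β mhigh ^ 2),
          div_self (mul_ne_zero hClow.ne' hne1)]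
      calc (1:ℝ) = cst * (β mlow ^ d / (k * lam * β mhigh ^ 2)) := h13.symm
        _ ≤ cst * (t1 - t₀) := mul_le_mul_of_nonneg_left h12 hcstpos.le
    have h14 : ψ t1 ≤ ψ t₀ := h8
    rw [hψ] at h14
    simp only at h14
    have h15 : cst * (t₀ - t₀) = 0 := by ring
    linarith
  · -- CASE II : 0 < Ω 0
    have hκ0pos : 0 < 2 * k * Ω 0 := mul_pos (mul_pos two_pos hk) hΩ0
    have hrate2 : ∀ t, t₀ ≤ t → 0 < V t → VD t ≤ -(2 * k * Ω 0) := by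
      intro t ht hVt
      have hpos2 : 0 < ∑ e, (((D (σ t))ᵀ.mulVec (x t)) e) ^ 2 :=
        lt_of_lt_of_le (mul_pos hlam hVt) (hnorm t ht)
      have hne : ∃ e, ((D (σ t))ᵀ.mulVec (x t)) e ≠ 0 := by
        by_contra h
        push_neg at h
        have hz : ∑ e, (((D (σ t))ᵀ.mulVec (x t)) e) ^ 2 = 0 :=
          Finset.sum_eq_zero fun e _ => by rw [h e]; ring
        rw [hz] at hpos2
        exact lt_irrefl 0 hpos2
      obtain ⟨e0, he0⟩ := hne
      have hterm : k * Ω 0 ≤ (if ((D (σ t))ᵀ.mulVec (x t)) e0 = 0 then 0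
          else κ (σ t) e0 * Ω |((D (σ t))ᵀ.mulVec (x t)) e0|) := by
        rw [if_neg he0]
        exact mul_le_mul (hκ _ _) (hΩm (abs_nonneg _)) hΩ0.le (le_trans hk.le (hκ _ _))
      have hsge : k * Ω 0 ≤
          ((D (σ t))ᵀ.mulVec (x t)) ⬝ᵥ F (σ t) ((D (σ t))ᵀ.mulVec (x t)) := by
        rw [hdotval t]
        exact le_trans hterm (Finset.single_le_sum (fun e _ => htermnn t e) (Finset.mem_univ e0))
      rw [hVDdef]
      simp only
      linarith
    have hzero : ∀ t, t₀ ≤ t → V t = 0 := by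
      intro t1 ht1
      by_contra hne0
      have hVt1 : 0 < V t1 := (hVnonneg t1).lt_of_ne (Ne.symm hne0)
      set κ0 := 2 * k * Ω 0 with hκ0def
      set t2 := t1 + V t1 / κ0 + 1 with ht2def
      have ht1t2 : t1 < t2 := by
        have : 0 ≤ V t1 / κ0 := div_nonneg (hVnonneg t1) hκ0pos.le
        rw [ht2def]
        linarith
      have hWder : ∀ s, t₀ ≤ s → HasDerivAt (fun r => V r + κ0 * r) (VD s + κ0) s := by
        intro s hs
        have h1 : HasDerivAt (fun r : ℝ => κ0 * r) κ0 s := by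
          simpa using (hasDerivAt_id s).const_mul κ0
        exact (hVder s hs).add h1
      by_cases hall : ∀ s ∈ Set.Icc t1 t2, 0 < V s
      · have hanti : AntitoneOn (fun r => V r + κ0 * r) (Set.Icc t1 t2) :=
          antitoneOn_of_hasDerivAt_nonpos' (fun s hs => hWder s (ht1.trans hs.1))
            (fun s hs => by
              have := hrate2 s (ht1.trans hs.1.le) (hall s (Set.Ioo_subset_Icc_self hs))
              linarith)
        have h3 := hanti (Set.left_mem_Icc.2 ht1t2.le) (Set.right_mem_Icc.2 ht1t2.le) ht1t2.le
        have h4 : κ0 * (t2 - t1) = V t1 + κ0 := by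
          rw [ht2def]
          field_simp
          ring
        have h5 := hVnonneg t2
        have h3' : V t2 + κ0 * t2 ≤ V t1 + κ0 * t1 := h3
        nlinarith [h3', h4, h5]
      · push_neg at hall
        obtain ⟨s0, hs0mem, hs0⟩ := hall
        have hVs0 : V s0 = 0 := le_antisymm hs0 (hVnonneg s0)
        have hSeq : {s : ℝ | s ∈ Set.Icc t1 t2 ∧ V s = 0} =
            Set.Icc t1 t2 ∩ V ⁻¹' {0} := by
          ext y
          simp [Set.mem_inter_iff]
        have hVcont : ContinuousOn V (Set.Icc t1 t2) := fun s hs =>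
          (hVder s (ht1.trans hs.1)).continuousAt.continuousWithinAt
        have hScl : IsClosed {s : ℝ | s ∈ Set.Icc t1 t2 ∧ V s = 0} := by
          rw [hSeq]
          exact hVcont.preimage_isClosed_of_isClosed isClosed_Icc isClosed_singleton
        have hSne : {s : ℝ | s ∈ Set.Icc t1 t2 ∧ V s = 0}.Nonempty := ⟨s0, hs0mem, hVs0⟩
        have hbdd : BddBelow {s : ℝ | s ∈ Set.Icc t1 t2 ∧ V s = 0} :=
          ⟨t1, fun y hy => hy.1.1⟩
        set ts := sInf {s : ℝ | s ∈ Set.Icc t1 t2 ∧ V s = 0} with hts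
        have htsS : ts ∈ {s : ℝ | s ∈ Set.Icc t1 t2 ∧ V s = 0} :=
          hScl.csInf_mem hSne hbdd
        have hVts : V ts = 0 := htsS.2
        have ht1ts : t1 < ts := by
          rcases lt_or_eq_of_le htsS.1.1 with h | h
          · exact h
          · exfalso
            rw [← h] at hVts
            rw [hVts] at hVt1
            exact lt_irrefl 0 hVt1
        have hmid : ∀ s, s ∈ Set.Ico t1 ts → 0 < V s := by
          intro s hs
          have hsnot : s ∉ {s : ℝ | s ∈ Set.Icc t1 t2 ∧ V s = 0} :=
            notMem_of_lt_csInf hs.2 hbdd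
          have hsIcc : s ∈ Set.Icc t1 t2 := ⟨hs.1, hs.2.le.trans htsS.1.2⟩
          rcases (hVnonneg s).eq_or_lt with h | h
          · exact absurd ⟨hsIcc, h.symm⟩ hsnot
          · exact h
        have hWanti : AntitoneOn (fun r => V r + κ0 * r) (Set.Icc t1 ts) :=
          antitoneOn_of_hasDerivAt_nonpos' (fun s hs => hWder s (ht1.trans hs.1))
            (fun s hs => by
              have := hrate2 s (ht1.trans hs.1.le) (hmid s ⟨hs.1.le, hs.2⟩)
              linarith)
        have hlin : ∀ s ∈ Set.Icc t1 ts, κ0 * (ts - s) ≤ V s := by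
          intro s hs
          have h1 := hWanti hs (Set.right_mem_Icc.2 ht1ts.le) hs.2
          simp only at h1
          rw [hVts] at h1
          linarith
        have hderts : HasDerivAt V (VD ts) ts := hVder ts (ht1.trans htsS.1.1)
        have hmin : IsLocalMin V ts :=
          Filter.Eventually.of_forall fun y => by rw [hVts]; exact hVnonneg y
        have hVD0 : VD ts = 0 := hmin.hasDerivAt_eq_zero hderts
        have htends : Filter.Tendsto (slope V ts) (nhdsWithin ts {ts}ᶜ) (nhds 0) := by
          have h1 := hasDerivAt_iff_tendsto_slope.1 hderts
          rwa [hVD0] at h1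
        have htends' : Filter.Tendsto (slope V ts) (nhdsWithin ts (Set.Iio ts)) (nhds 0) :=
          htends.mono_left (nhdsWithin_mono _ (fun y hy => ne_of_lt hy))
        have hev : ∀ᶠ s in nhdsWithin ts (Set.Iio ts), slope V ts s ≤ -κ0 := by
          filter_upwards [Ioo_mem_nhdsLT_of_mem
            (Set.mem_Ioc.2 ⟨ht1ts, le_rfl⟩ : ts ∈ Set.Ioc t1 ts)]
          intro s hs
          have h1 : κ0 * (ts - s) ≤ V s := hlin s ⟨hs.1.le, hs.2.le⟩
          have h2 : s - ts < 0 := by linarith [hs.2]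
          rw [slope_def_field, hVts, sub_zero, div_le_iff_of_neg h2]
          linarith
        have hlim := le_of_tendsto htends' hev
        linarith
    intro t1 ht1 i
    exact hfin t1 (hzero t1 (by linarith)) i
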